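/- arXiv:1906.09117 — 3 statements merged into one kernel-verified Lean document; each statement's English description precedes it below -/
import Mathlib

section
/- Let a ≥ 0 and b ≥ 1 be integers. Set v := u^a·((1+u)^p − 1)^b = u^a·φ(u)^b ∈ 𝔖 and v' := u^{a+bp}; both v and v' are units in 𝒪_ℰ. Then 𝔖[[p/v]] ⊆ 𝔖[[p/v']]; that is, for every sequence (s_n)_{n≥0} in 𝔖 there exists a sequence (t_n)_{n≥0} in 𝔖 such that Σ_{n≥0} p^n s_n v^{−n} = Σ_{n≥0} p^n t_n (v')^{−n} in 𝒪_ℰ (both series converge p-adically in 𝒪_ℰ). -/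
/-!
Statement 1: Let `a ≥ 0`, `b ≥ 1` be integers.  Set `v := u^a·((1+u)^p − 1)^b = u^a·φ(u)^b`
and `v' := u^{a+bp}` in `𝔖 = W(k)[[u]]`; both are units in `𝒪_ℰ` (the `p`-adic completion
of `𝔖[1/u]`).  Then `𝔖[[p/v]] ⊆ 𝔖[[p/v']]`: every element of `𝒪_ℰ` which is the `p`-adic
sum of a series `Σ_{n≥0} p^n s_n v^{−n}` with `s_n ∈ 𝔖` is also the sum of a series
`Σ_{n≥0} p^n t_n (v')^{−n}` with `t_n ∈ 𝔖`.
-/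

open PowerSeries

section Setup

variable (p : ℕ) [Fact p.Prime] (k : Type) [Field k] [CharP k p] [PerfectRing k p]

/-- `𝔖 = W(k)[[u]]`. -/
abbrev FrakS := PowerSeries (WittVector p k)

/-- `𝔖[1/u]`. -/
abbrev SLoc := Localization.Away (X : FrakS p k)

/-- `𝒪_ℰ`, the `p`-adic completion of `𝔖[1/u]`. -/
abbrev OE := AdicCompletion (Ideal.span {(p : SLoc p k)}) (SLoc p k)

/-- The canonical map `𝔖 → 𝒪_ℰ`. -/
noncomputable def iotaOE : FrakS p k →+* OE p k :=
  (algebraMap (SLoc p k) (OE p k)).comp (algebraMap (FrakS p k) (SLoc p k))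

/-- The `N`-th partial sum `Σ_{n<N} p^n s_n w^{-n}` of a series `Σ p^n s_n w^{-n}` in `𝒪_ℰ`. -/
noncomputable def partialSum (w : FrakS p k) (s : ℕ → FrakS p k) (N : ℕ) : OE p k :=
  ∑ n ∈ Finset.range N,
    iotaOE p k (s n) * (p : OE p k) ^ n * (Ring.inverse (iotaOE p k w)) ^ n

/-- `x ∈ 𝔖[[p/w]]`: `x` is the (`p`-adic) sum of a series `Σ_{n≥0} p^n s_n w^{-n}` with
`s_n ∈ 𝔖`, i.e. the partial sums converge `p`-adically to `x`. -/
def memSeriesRing (w : FrakS p k) (x : OE p k) : Prop :=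
  ∃ s : ℕ → FrakS p k, ∀ N : ℕ,
    x - partialSum p k w s N ∈ Ideal.span {(p : OE p k)} ^ N

end Setup



/-! ### Generic commutative-ring identities (proved abstractly to avoid `ring` on `OE`) -/

section Generic

variable {A : Type*} [CommRing A]

theorem g_rel (F Fi U Ui c P : A) (pp : ℕ) (hF : F * Fi = 1) (hU : U * Ui = 1)
    (hFe : F = U ^ pp + P * c) : Fi = Ui ^ pp - P * (c * Ui ^ pp * Fi) := by
  have hUp : U ^ pp * Ui ^ pp = 1 := by rw [← mul_pow, hU, one_pow]
  linear_combination Ui ^ pp * hF - Fi * hUp - Fi * Ui ^ pp * hFe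

theorem g_factor (F Uq c P Uqi : A) (hFe : F = Uq + P * c) (hU : Uq * Uqi = 1) :
    F = Uq * (1 + P * (c * Uqi)) := by
  linear_combination hFe - P * c * hU

theorem g_zero (cc U Ui P : A) (h : U * Ui = 1) (M i : ℕ) (hi : i ≤ M) :
    cc * Ui ^ i * 1 = cc * U ^ (M - i) * Ui ^ M + P * 0 := by
  obtain ⟨d, rfl⟩ : ∃ d, M = d + i := ⟨M - i, (Nat.sub_add_cancel hi).symm⟩
  have h3 : d + i - i = d := by omega
  have h2 : U ^ d * Ui ^ d = 1 := by rw [← mul_pow, h, one_pow]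
  rw [h3]
  linear_combination (-(cc * Ui ^ i)) * h2

theorem g_succ (cc Ui Fi ch T P y : A) (i j pp : ℕ)
    (hrel : Fi = Ui ^ pp - P * (ch * Ui ^ pp * Fi))
    (hEq : cc * Ui ^ (i + pp) * Fi ^ j = T + P * y) :
    cc * Ui ^ i * Fi ^ (j + 1) = T + P * (y - cc * ch * Ui ^ (i + pp) * Fi ^ (j + 1)) := by
  linear_combination (cc * Ui ^ i * Fi ^ j) * hrel + hEq

theorem g_add (c1 c2 M P y1 y2 : A) :
    (c1 * M + P * y1) + (c2 * M + P * y2) = (c1 + c2) * M + P * (y1 + y2) := by ring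

theorem g_neg (c M P y : A) : -(c * M + P * y) = -c * M + P * (-y) := by ring

theorem g_step (S T P ys ys' sN tN UA FB UV : A) (N : ℕ)
    (h1 : S - T = P ^ N * ys)
    (h2 : ys + sN * UA * FB = tN * UV + P * ys') :
    (S + sN * P ^ N * (UA * FB)) - (T + tN * P ^ N * UV) = P ^ (N + 1) * ys' := by
  linear_combination h1 + P ^ N * h2

end Generic

/-! ### Units in the adic completion -/

section Units

variable {R : Type*} [CommRing R] (I : Ideal R)

theorem my_isUnit_of_val (x : AdicCompletion I R)
    (h : ∀ n, IsUnit (x.val n)) : IsUnit x := by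
  refine IsUnit.of_mul_eq_one (a := x) ⟨fun n => ↑(h n).unit⁻¹, ?_⟩ ?_
  · intro m n hmn
    show AdicCompletion.transitionMap I R hmn ↑(h n).unit⁻¹ = ↑(h m).unit⁻¹
    have h1 : AdicCompletion.transitionMap I R hmn ↑(h n).unit⁻¹ * x.val m = 1 := by
      have := x.property hmn
      calc AdicCompletion.transitionMap I R hmn ↑(h n).unit⁻¹ * x.val m
          = AdicCompletion.transitionMap I R hmn (↑(h n).unit⁻¹ * x.val n) := by
            rw [AdicCompletion.transitionMap_map_mul, this]
        _ = AdicCompletion.transitionMap I R hmn 1 := by rw [(h n).val_inv_mul]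
        _ = 1 := AdicCompletion.transitionMap_map_one I hmn
    have h2 : (↑(h m).unit⁻¹ : _) * x.val m = 1 := (h m).val_inv_mul
    exact (h m).mul_right_cancel (h1.trans h2.symm)
  · ext n
    show x.val n * ↑(h n).unit⁻¹ = 1
    exact (h n).mul_val_inv

theorem my_isUnit_one_add_smul {r : R} (hr : r ∈ I) (z : AdicCompletion I R) :
    IsUnit (1 + algebraMap R (AdicCompletion I R) r * z) := by
  apply my_isUnit_of_val
  intro n
  have hval : ((1 : AdicCompletion I R) + algebraMap R _ r * z).val n
      = 1 + Ideal.Quotient.mk (I ^ n • ⊤ : Ideal R) r * z.val n := rfl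
  rw [hval]
  refine IsNilpotent.isUnit_one_add ⟨n, ?_⟩
  rw [mul_pow, ← map_pow]
  have : (r : R) ^ n ∈ (I ^ n • ⊤ : Ideal R) := by
    rw [smul_eq_mul, Ideal.mul_top]
    exact Ideal.pow_mem_pow hr n
  rw [Ideal.Quotient.eq_zero_iff_mem.2 this, zero_mul]

end Units

/-! ### The Frobenius decomposition `(1+X)^p - 1 = X^p + p·X·h` -/

theorem my_frob_int (p : ℕ) [Fact p.Prime] :
    ∃ G : Polynomial ℤ, ((1 + Polynomial.X : Polynomial ℤ) ^ p - 1)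
      = Polynomial.X ^ p + Polynomial.C (p : ℤ) * (Polynomial.X * G) := by
  have hp : 2 ≤ p := (Fact.out : p.Prime).two_le
  set f : Polynomial ℤ := (1 + Polynomial.X) ^ p - 1 - Polynomial.X ^ p with hf
  have hmap : f.map (Int.castRingHom (ZMod p)) = 0 := by
    simp only [hf, Polynomial.map_sub, Polynomial.map_pow, Polynomial.map_add,
      Polynomial.map_one, Polynomial.map_X]
    rw [add_pow_char, one_pow]
    ring
  have hdvd : Polynomial.C (p : ℤ) ∣ f := by
    rw [Polynomial.C_dvd_iff_dvd_coeff]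
    intro i
    have : ((f.coeff i : ℤ) : ZMod p) = 0 := by
      have := congrArg (fun q => Polynomial.coeff q i) hmap
      simpa [Polynomial.coeff_map] using this
    exact_mod_cast (ZMod.intCast_zmod_eq_zero_iff_dvd _ p).1 this
  obtain ⟨G0, hG0⟩ := hdvd
  have hc0 : f.coeff 0 = 0 := by
    rw [hf]
    simp [Polynomial.coeff_zero_eq_eval_zero, zero_pow (by omega : p ≠ 0)]
  have hG0c : G0.coeff 0 = 0 := by
    have := congrArg (fun q => Polynomial.coeff q 0) hG0
    simp only [Polynomial.coeff_C_mul, hc0] at this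
    have hpne : (p : ℤ) ≠ 0 := by exact_mod_cast (Fact.out : p.Prime).ne_zero
    rw [eq_comm, mul_eq_zero] at this
    tauto
  obtain ⟨G, hG⟩ := Polynomial.X_dvd_iff.2 hG0c
  refine ⟨G, ?_⟩
  have : f = Polynomial.C (p : ℤ) * (Polynomial.X * G) := by rw [hG0, hG]
  linear_combination this

section Main

variable (p : ℕ) [Fact p.Prime] (k : Type) [Field k] [CharP k p] [PerfectRing k p]

theorem my_frob_decomp :
    ∃ h : FrakS p k, ((1 + X) ^ p - 1 : FrakS p k) = X ^ p + (p : FrakS p k) * (X * h) := by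
  obtain ⟨G, hG⟩ := my_frob_int p
  refine ⟨Polynomial.aeval (X : FrakS p k) G, ?_⟩
  have := congrArg (Polynomial.aeval (X : FrakS p k)) hG
  simp only [map_sub, map_add, map_pow, map_one, map_mul, Polynomial.aeval_X,
    Polynomial.aeval_C] at this
  rw [this]
  push_cast
  ring

theorem my_isUnit_X : IsUnit (iotaOE p k X) :=
  (IsLocalization.Away.algebraMap_isUnit (X : FrakS p k)).map (algebraMap (SLoc p k) (OE p k))

theorem my_isUnit_one_add_p (z : OE p k) : IsUnit (1 + (p : OE p k) * z) := by
  have h0 := my_isUnit_one_add_smul (Ideal.span {(p : SLoc p k)}) (Ideal.mem_span_singleton_self (p : SLoc p k)) z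
  have e : (algebraMap (SLoc p k) (OE p k)) ((p : ℕ) : SLoc p k) = ((p : ℕ) : OE p k) :=
    map_natCast (algebraMap (SLoc p k) (OE p k)) p
  rwa [e] at h0

theorem my_hFe (h : FrakS p k) (hh : ((1 + X) ^ p - 1 : FrakS p k) = X ^ p + (p : FrakS p k) * (X * h)) :
    iotaOE p k ((1 + X) ^ p - 1) = (iotaOE p k X) ^ p + (p : OE p k) * iotaOE p k (X * h) := by
  rw [hh, map_add, map_mul, map_pow, map_natCast]

theorem my_isUnit_F : IsUnit (iotaOE p k ((1 + X) ^ p - 1)) := by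
  obtain ⟨h, hh⟩ := my_frob_decomp p k
  have hU : IsUnit (iotaOE p k X) := my_isUnit_X p k
  have hUp : IsUnit ((iotaOE p k X) ^ p) := hU.pow p
  have hUpc : (iotaOE p k X) ^ p * Ring.inverse ((iotaOE p k X) ^ p) = 1 :=
    Ring.mul_inverse_cancel _ hUp
  have key := g_factor (iotaOE p k ((1 + X) ^ p - 1)) ((iotaOE p k X) ^ p)
    (iotaOE p k (X * h)) (p : OE p k) (Ring.inverse ((iotaOE p k X) ^ p))
    (my_hFe p k h hh) hUpc
  rw [key]
  exact hUp.mul (my_isUnit_one_add_p p k _)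

end Main

/-! ### The inductive predicate of admissible remainders -/

inductive Good (p : ℕ) [Fact p.Prime] (k : Type) [Field k] [CharP k p] [PerfectRing k p]
    (a b N : ℕ) : OE p k → Prop
  | zero : Good p k a b N 0
  | add {x y : OE p k} : Good p k a b N x → Good p k a b N y → Good p k a b N (x + y)
  | neg {x : OE p k} : Good p k a b N x → Good p k a b N (-x)
  | mono (c : FrakS p k) (i j : ℕ) (hij : i + p * j ≤ (a + b * p) * N) :
      Good p k a b N (iotaOE p k c * (Ring.inverse (iotaOE p k X)) ^ i *
        (Ring.inverse (iotaOE p k ((1 + X) ^ p - 1))) ^ j)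

section Steps

variable (p : ℕ) [Fact p.Prime] (k : Type) [Field k] [CharP k p] [PerfectRing k p]

theorem stepMono (a b : ℕ) (hb : 1 ≤ b) (N : ℕ) :
    ∀ (j i : ℕ) (c : FrakS p k), i + p * j ≤ (a + b * p) * N →
    ∃ (t : FrakS p k) (y : OE p k), Good p k a b (N + 1) y ∧
      iotaOE p k c * (Ring.inverse (iotaOE p k X)) ^ i *
          (Ring.inverse (iotaOE p k ((1 + X) ^ p - 1))) ^ j
        = iotaOE p k t * (Ring.inverse (iotaOE p k X)) ^ ((a + b * p) * N) + (p : OE p k) * y := by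
  have hU : IsUnit (iotaOE p k X) := my_isUnit_X p k
  have hUi : iotaOE p k X * Ring.inverse (iotaOE p k X) = 1 := Ring.mul_inverse_cancel _ hU
  have hF : IsUnit (iotaOE p k ((1 + X) ^ p - 1)) := my_isUnit_F p k
  have hFi : iotaOE p k ((1 + X) ^ p - 1) * Ring.inverse (iotaOE p k ((1 + X) ^ p - 1)) = 1 :=
    Ring.mul_inverse_cancel _ hF
  obtain ⟨h, hh⟩ := my_frob_decomp p k
  have hrel : Ring.inverse (iotaOE p k ((1 + X) ^ p - 1))
      = (Ring.inverse (iotaOE p k X)) ^ p - (p : OE p k) * (iotaOE p k (X * h) *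
          (Ring.inverse (iotaOE p k X)) ^ p * Ring.inverse (iotaOE p k ((1 + X) ^ p - 1))) :=
    g_rel _ _ _ _ _ _ p hFi hUi (my_hFe p k h hh)
  have hple : p ≤ a + b * p := by
    calc p = 1 * p := (one_mul p).symm
    _ ≤ b * p := Nat.mul_le_mul_right p hb
    _ ≤ a + b * p := Nat.le_add_left _ _
  intro j
  induction j with
  | zero =>
    intro i c hij
    have hi : i ≤ (a + b * p) * N := by
      calc i ≤ i + p * 0 := Nat.le_add_right _ _
      _ ≤ (a + b * p) * N := hij
    refine ⟨c * X ^ ((a + b * p) * N - i), 0, Good.zero, ?_⟩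
    rw [pow_zero, map_mul, map_pow]
    exact g_zero (iotaOE p k c) (iotaOE p k X) (Ring.inverse (iotaOE p k X)) (p : OE p k)
      hUi ((a + b * p) * N) i hi
  | succ j IH =>
    intro i c hij
    have hij' : (i + p) + p * j ≤ (a + b * p) * N := by
      have : (i + p) + p * j = i + p * (j + 1) := by ring
      rw [this]; exact hij
    obtain ⟨t, y, hy, hEq⟩ := IH (i + p) c hij'
    refine ⟨t, y - iotaOE p k (c * (X * h)) * (Ring.inverse (iotaOE p k X)) ^ (i + p) *
        (Ring.inverse (iotaOE p k ((1 + X) ^ p - 1))) ^ (j + 1), ?_, ?_⟩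
    · have hbound : (i + p) + p * (j + 1) ≤ (a + b * p) * (N + 1) := by
        have e1 : (i + p) + p * (j + 1) = (i + p * (j + 1)) + p := by ring
        rw [e1, Nat.mul_succ]
        exact Nat.add_le_add hij hple
      rw [sub_eq_add_neg]
      exact hy.add (Good.neg (Good.mono (c * (X * h)) (i + p) (j + 1) hbound))
    · rw [map_mul]
      exact g_succ (iotaOE p k c) (Ring.inverse (iotaOE p k X))
        (Ring.inverse (iotaOE p k ((1 + X) ^ p - 1))) (iotaOE p k (X * h))
        (iotaOE p k t * (Ring.inverse (iotaOE p k X)) ^ ((a + b * p) * N)) (p : OE p k) y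
        i j p hrel hEq

theorem stepGood (a b : ℕ) (hb : 1 ≤ b) (N : ℕ) (x : OE p k) (hx : Good p k a b N x) :
    ∃ (t : FrakS p k) (y : OE p k), Good p k a b (N + 1) y ∧
      x = iotaOE p k t * (Ring.inverse (iotaOE p k X)) ^ ((a + b * p) * N) + (p : OE p k) * y := by
  induction hx with
  | zero =>
    exact ⟨0, 0, Good.zero, by rw [map_zero, zero_mul, mul_zero, add_zero]⟩
  | add hx1 hx2 ih1 ih2 =>
    obtain ⟨t1, y1, h1, e1⟩ := ih1
    obtain ⟨t2, y2, h2, e2⟩ := ih2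
    refine ⟨t1 + t2, y1 + y2, h1.add h2, ?_⟩
    rw [e1, e2, map_add]
    exact g_add _ _ _ _ _ _
  | neg hx1 ih1 =>
    obtain ⟨t1, y1, h1, e1⟩ := ih1
    refine ⟨-t1, -y1, h1.neg, ?_⟩
    rw [e1, map_neg]
    exact g_neg _ _ _ _
  | mono c i j hij =>
    exact stepMono p k a b hb N j i c hij

end Steps

theorem statement1 (p : ℕ) [Fact p.Prime] (k : Type) [Field k] [CharP k p]
    [PerfectRing k p] (a b : ℕ) (hb : 1 ≤ b) :
    IsUnit (iotaOE p k (X ^ a * ((1 + X) ^ p - 1) ^ b)) ∧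
    IsUnit (iotaOE p k (X ^ (a + b * p))) ∧
    ∀ x : OE p k,
      memSeriesRing p k (X ^ a * ((1 + X) ^ p - 1) ^ b) x →
      memSeriesRing p k (X ^ (a + b * p)) x := by
  have hU : IsUnit (iotaOE p k X) := my_isUnit_X p k
  have hF : IsUnit (iotaOE p k ((1 + X) ^ p - 1)) := my_isUnit_F p k
  refine ⟨by rw [map_mul, map_pow, map_pow]; exact (hU.pow a).mul (hF.pow b),
    by rw [map_pow]; exact hU.pow _, ?_⟩
  intro x hx
  obtain ⟨s, hs⟩ := hx
  -- rewrite the inverse powers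
  have hVbase : Ring.inverse (iotaOE p k (X ^ a * ((1 + X) ^ p - 1) ^ b))
      = (Ring.inverse (iotaOE p k X)) ^ a *
        (Ring.inverse (iotaOE p k ((1 + X) ^ p - 1))) ^ b := by
    rw [map_mul, map_pow, map_pow, Ring.mul_inverse_rev, ← Ring.inverse_pow, ← Ring.inverse_pow]
    exact mul_comm _ _
  have hVinv : ∀ n : ℕ, (Ring.inverse (iotaOE p k (X ^ a * ((1 + X) ^ p - 1) ^ b))) ^ n
      = (Ring.inverse (iotaOE p k X)) ^ (a * n) *
        (Ring.inverse (iotaOE p k ((1 + X) ^ p - 1))) ^ (b * n) := by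
    intro n
    rw [hVbase, mul_pow, ← pow_mul, ← pow_mul]
  have hV'inv : ∀ n : ℕ, (Ring.inverse (iotaOE p k (X ^ (a + b * p)))) ^ n
      = (Ring.inverse (iotaOE p k X)) ^ ((a + b * p) * n) := by
    intro n
    rw [map_pow, ← Ring.inverse_pow, ← pow_mul]
  -- the step existence, made total
  have stepEx : ∀ (M : ℕ) (z : OE p k), ∃ ty : FrakS p k × OE p k,
      Good p k a b M z → Good p k a b (M + 1) ty.2 ∧
        z = iotaOE p k ty.1 * (Ring.inverse (iotaOE p k X)) ^ ((a + b * p) * M)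
          + (p : OE p k) * ty.2 := by
    intro M z
    by_cases hz : Good p k a b M z
    · obtain ⟨t0, y0, h1, h2⟩ := stepGood p k a b hb M z hz
      exact ⟨(t0, y0), fun _ => ⟨h1, h2⟩⟩
    · exact ⟨(0, 0), fun hzz => absurd hzz hz⟩
  -- the recursively defined remainders and coefficients
  let Yf : ℕ → OE p k := fun N => Nat.rec (0 : OE p k)
    (fun M y => (Classical.choose (stepEx M (y + iotaOE p k (s M) *
      (Ring.inverse (iotaOE p k X)) ^ (a * M) *
      (Ring.inverse (iotaOE p k ((1 + X) ^ p - 1))) ^ (b * M)))).2) N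
  let t : ℕ → FrakS p k := fun M => (Classical.choose (stepEx M (Yf M + iotaOE p k (s M) *
      (Ring.inverse (iotaOE p k X)) ^ (a * M) *
      (Ring.inverse (iotaOE p k ((1 + X) ^ p - 1))) ^ (b * M)))).1
  have key : ∀ N : ℕ, Good p k a b N (Yf N) ∧
      (∑ n ∈ Finset.range N, iotaOE p k (s n) * (p : OE p k) ^ n *
        ((Ring.inverse (iotaOE p k X)) ^ (a * n) *
          (Ring.inverse (iotaOE p k ((1 + X) ^ p - 1))) ^ (b * n)))
      - (∑ n ∈ Finset.range N, iotaOE p k (t n) * (p : OE p k) ^ n *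
        (Ring.inverse (iotaOE p k X)) ^ ((a + b * p) * n))
      = (p : OE p k) ^ N * Yf N := by
    intro N
    induction N with
    | zero =>
      refine ⟨Good.zero, ?_⟩
      rw [Finset.sum_range_zero, Finset.sum_range_zero]
      show (0 : OE p k) - 0 = (p : OE p k) ^ 0 * 0
      rw [mul_zero, sub_zero]
    | succ N ih =>
      obtain ⟨hg, hinv⟩ := ih
      have hzGood : Good p k a b N (Yf N + iotaOE p k (s N) *
          (Ring.inverse (iotaOE p k X)) ^ (a * N) *
          (Ring.inverse (iotaOE p k ((1 + X) ^ p - 1))) ^ (b * N)) :=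
        hg.add (Good.mono (s N) (a * N) (b * N)
          (Nat.le_of_eq (by ring)))
      have hspec := Classical.choose_spec (stepEx N (Yf N + iotaOE p k (s N) *
          (Ring.inverse (iotaOE p k X)) ^ (a * N) *
          (Ring.inverse (iotaOE p k ((1 + X) ^ p - 1))) ^ (b * N))) hzGood
      refine ⟨hspec.1, ?_⟩
      rw [Finset.sum_range_succ, Finset.sum_range_succ]
      exact g_step _ _ _ _ _ _ _ _ _ _ N hinv hspec.2
  refine ⟨t, fun N => ?_⟩
  have e1 : partialSum p k (X ^ a * ((1 + X) ^ p - 1) ^ b) s N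
      = ∑ n ∈ Finset.range N, iotaOE p k (s n) * (p : OE p k) ^ n *
        ((Ring.inverse (iotaOE p k X)) ^ (a * n) *
          (Ring.inverse (iotaOE p k ((1 + X) ^ p - 1))) ^ (b * n)) :=
    Finset.sum_congr rfl (fun n _ => by rw [hVinv n])
  have e2 : partialSum p k (X ^ (a + b * p)) t N
      = ∑ n ∈ Finset.range N, iotaOE p k (t n) * (p : OE p k) ^ n *
        (Ring.inverse (iotaOE p k X)) ^ ((a + b * p) * n) :=
    Finset.sum_congr rfl (fun n _ => by rw [hV'inv n])
  have hsplit : x - partialSum p k (X ^ (a + b * p)) t N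
      = (x - partialSum p k (X ^ a * ((1 + X) ^ p - 1) ^ b) s N)
        + (partialSum p k (X ^ a * ((1 + X) ^ p - 1) ^ b) s N
          - partialSum p k (X ^ (a + b * p)) t N) :=
    (sub_add_sub_cancel _ _ _).symm
  rw [hsplit]
  refine Ideal.add_mem _ (hs N) ?_
  rw [e1, e2, (key N).2, Ideal.span_singleton_pow]
  exact Ideal.mem_span_singleton'.2 ⟨Yf N, mul_comm _ _⟩
end

section
/- Let m ≥ 1 and b ≥ 1 be integers. Then there exist s, t ∈ 𝔖 such that φ(u^{mb}) = ((1+u)^p − 1)^{mb} = u^{pm(b−1)}·s + p^{m+1}·t. In particular, φ(u^{mb}) lies in u^{pmb−pm}·𝔖 + p^{m+1}·𝔖, which (under the standard embedding 𝔖 ⊆ W(R)) yields the paper's statement that φ(u^{mb}) ∈ u^{pmb−pm}·W(R) modulo p^{m+1}·W(Fr R). -/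
/-!
Statement 3: for integers `m ≥ 1`, `b ≥ 1`, there exist `s, t ∈ 𝔖 = W(k)[[u]]` with
`φ(u^{mb}) = ((1+u)^p − 1)^{mb} = u^{pm(b−1)}·s + p^{m+1}·t`,
i.e. `φ(u^{mb}) ∈ u^{pmb−pm}·𝔖 + p^{m+1}·𝔖`.
-/

open PowerSeries

lemma aux_sup_pow_le {R : Type*} [CommRing R] (I J : Ideal R) (n m : ℕ) :
    (I ⊔ J) ^ (n + m) ≤ I ^ n ⊔ J ^ (m + 1) := by
  rw [← Ideal.add_eq_sup, ← Ideal.add_eq_sup, add_pow, Ideal.sum_eq_sup]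
  apply Finset.sup_le
  intro i hi
  by_cases hn : n ≤ i
  · exact Ideal.mul_le_left.trans (Ideal.mul_le_left.trans
      ((Ideal.pow_le_pow_right hn).trans le_sup_left))
  · refine Ideal.mul_le_left.trans (Ideal.mul_le_right.trans
      ((Ideal.pow_le_pow_right ?_).trans le_sup_right))
    simp only [Finset.mem_range] at hi
    omega

theorem statement3 (p : ℕ) [Fact p.Prime] (k : Type*) [Field k] [CharP k p]
    [PerfectRing k p] (m b : ℕ) (hm : 1 ≤ m) (hb : 1 ≤ b) :
    ∃ s t : PowerSeries (WittVector p k),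
      ((1 + X : PowerSeries (WittVector p k)) ^ p - 1) ^ (m * b) =
        X ^ (p * m * (b - 1)) * s + (p : PowerSeries (WittVector p k)) ^ (m + 1) * t := by
  set R := PowerSeries (WittVector p k)
  have hp : p.Prime := Fact.out
  obtain ⟨r, hr⟩ := exists_add_pow_prime_eq hp (1 : R) X
  have hmem : ((1 + X : R) ^ p - 1) ∈
      Ideal.span {(X : R) ^ p} ⊔ Ideal.span {(p : R)} := by
    have : (1 + X : R) ^ p - 1 = X ^ p + (p : R) * (X * r) := by
      rw [hr]; ring
    rw [this]
    exact Submodule.add_mem_sup (Ideal.mem_span_singleton_self _)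
      (Ideal.mem_span_singleton'.mpr ⟨X * r, mul_comm _ _⟩)
  have hpow : ((1 + X : R) ^ p - 1) ^ (m * b) ∈
      Ideal.span {(X : R) ^ (p * m * (b - 1))} ⊔ Ideal.span {(p : R) ^ (m + 1)} := by
    have h1 : m * b = m * (b - 1) + m := by
      cases b with
      | zero => omega
      | succ b' => simp [Nat.mul_succ]
    have h2 := aux_sup_pow_le (Ideal.span {(X : R) ^ p}) (Ideal.span {(p : R)})
      (m * (b - 1)) m
    have h3 : ((1 + X : R) ^ p - 1) ^ (m * b) ∈
        (Ideal.span {(X : R) ^ p} ⊔ Ideal.span {(p : R)}) ^ (m * (b - 1) + m) :=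
      h1 ▸ Ideal.pow_mem_pow hmem _
    have h4 := h2 h3
    rwa [Ideal.span_singleton_pow, Ideal.span_singleton_pow, ← pow_mul,
      show p * (m * (b - 1)) = p * m * (b - 1) by ring] at h4
  obtain ⟨y, hy, z, hz, hyz⟩ := Submodule.mem_sup.mp hpow
  obtain ⟨s, hs⟩ := Ideal.mem_span_singleton'.mp hy
  obtain ⟨t, ht⟩ := Ideal.mem_span_singleton'.mp hz
  exact ⟨s, t, by rw [← hyz, ← hs, ← ht]; ring⟩
end

section
/- Let v ∈ 𝔖 with v ∉ p𝔖 (so v is a unit in 𝒪_ℰ). Suppose (x_n)_{n≥1} is a sequence in 𝔖 such that the elements y_n := x_n·v^{−(n−1)} ∈ 𝒪_ℰ satisfy y_{n+1} ≡ y_n modulo p^n·𝒪_ℰ for all n ≥ 1. Then the sequence (y_n) converges p-adically in 𝒪_ℰ to a limit y which lies in 𝔖[[p/v]]; that is, y = Σ_{ℓ≥0} s_ℓ·(p/v)^ℓ for some sequence (s_ℓ) in 𝔖. -/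
set_option maxHeartbeats 1000000


/-!
Statement 4: Let `v ∈ 𝔖 = W(k)[[u]]` with `v ∉ p𝔖` (so `v` is a unit in `𝒪_ℰ`, the `p`-adic
completion of `𝔖[1/u]`).  Suppose `(x_n)_{n≥1}` is a sequence in `𝔖` such that the elements
`y_n := x_n·v^{−(n−1)} ∈ 𝒪_ℰ` satisfy `y_{n+1} ≡ y_n mod p^n𝒪_ℰ` for all `n ≥ 1`.  Then `(y_n)`
converges `p`-adically in `𝒪_ℰ` to a limit `y` lying in `𝔖[[p/v]]`, i.e.
`y = Σ_{ℓ≥0} s_ℓ (p/v)^ℓ` for some sequence `(s_ℓ)` in `𝔖`.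
-/

open PowerSeries

section Aux

/-- General membership criterion in a power of a principal ideal. -/
lemma mem_span_pow_iff {A : Type*} [CommRing A] (a : A) (n : ℕ) (z : A) :
    z ∈ Ideal.span {a} ^ n ↔ ∃ t, z = a ^ n * t := by
  rw [Ideal.span_singleton_pow, Ideal.mem_span_singleton]
  constructor
  · rintro ⟨t, rfl⟩; exact ⟨t, rfl⟩
  · rintro ⟨t, rfl⟩; exact ⟨t, rfl⟩

variable (p : ℕ) [Fact p.Prime] (k : Type) [Field k] [CharP k p] [PerfectRing k p]

lemma powersX_le :
    Submonoid.powers (X : FrakS p k) ≤ nonZeroDivisors (FrakS p k) :=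
  powers_le_nonZeroDivisors_of_noZeroDivisors PowerSeries.X_ne_zero

instance : IsDomain (SLoc p k) :=
  IsLocalization.isDomain_localization (powersX_le p k)

lemma algebraMap_SLoc_injective :
    Function.Injective (algebraMap (FrakS p k) (SLoc p k)) :=
  IsLocalization.injective _ (powersX_le p k)

lemma pS_ne_zero : (p : FrakS p k) ≠ 0 := by
  have h1 : (p : FrakS p k) = PowerSeries.C (p : WittVector p k) :=
    (map_natCast (PowerSeries.C (R := WittVector p k)) p).symm
  rw [h1, ne_eq, map_eq_zero_iff _ PowerSeries.C_injective]
  exact WittVector.p_nonzero p k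

lemma pR_ne_zero : (p : SLoc p k) ≠ 0 := by
  have : (p : SLoc p k) = algebraMap (FrakS p k) (SLoc p k) (p : FrakS p k) := by
    simp [map_natCast]
  rw [this, ne_eq, ← map_zero (algebraMap (FrakS p k) (SLoc p k))]
  exact fun h => pS_ne_zero p k (algebraMap_SLoc_injective p k h)

lemma smul_top_eq (n : ℕ) :
    (Ideal.span {(p : SLoc p k)} ^ n • ⊤ : Submodule (SLoc p k) (SLoc p k)) =
      Ideal.span {(p : SLoc p k)} ^ n := by
  rw [Ideal.smul_eq_mul, Ideal.mul_top]

/-- An element of `W(k)` not divisible by `p` is a unit. -/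
lemma isUnit_witt_of_not_dvd (c : WittVector p k) (h : ¬ (p : WittVector p k) ∣ c) :
    IsUnit c := by
  by_cases hc : c = 0
  · exact absurd (hc ▸ dvd_zero _) h
  obtain ⟨m, b, hb⟩ := WittVector.exists_eq_pow_p_mul' c hc
  cases m with
  | zero => rw [hb]; simpa using b.isUnit
  | succ m => exact absurd ⟨(p : WittVector p k) ^ m * b, by rw [hb]; ring⟩ h

/-- Divisibility by `p^n` in `𝔖` is coefficientwise. -/
lemma pPow_dvd_iff (n : ℕ) (f : FrakS p k) :
    (p : FrakS p k) ^ n ∣ f ↔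
      ∀ i, (p : WittVector p k) ^ n ∣ PowerSeries.coeff i f := by
  have hC : (p : FrakS p k) ^ n = PowerSeries.C ((p : WittVector p k) ^ n) := by
    rw [map_pow, map_natCast]
  constructor
  · rintro ⟨g, rfl⟩ i
    rw [hC, PowerSeries.coeff_C_mul]
    exact ⟨PowerSeries.coeff i g, rfl⟩
  · intro h
    refine ⟨PowerSeries.mk fun i => (h i).choose, ?_⟩
    refine PowerSeries.ext fun i => ?_
    rw [hC, PowerSeries.coeff_C_mul, PowerSeries.coeff_mk]
    exact (h i).choose_spec

lemma pPow_dvd_of_dvd_mul_X_pow (n j : ℕ) (f : FrakS p k)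
    (h : (p : FrakS p k) ^ n ∣ f * X ^ j) : (p : FrakS p k) ^ n ∣ f := by
  rw [pPow_dvd_iff] at h ⊢
  intro i
  have := h (i + j)
  rwa [PowerSeries.coeff_mul_X_pow] at this

lemma pPow_dvd_of_algebraMap_mem (n : ℕ) (f : FrakS p k)
    (h : algebraMap (FrakS p k) (SLoc p k) f ∈ Ideal.span {(p : SLoc p k)} ^ n) :
    (p : FrakS p k) ^ n ∣ f := by
  rw [mem_span_pow_iff] at h
  obtain ⟨t, ht⟩ := h
  obtain ⟨⟨s, u⟩, hmk⟩ := IsLocalization.mk'_surjective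
    (Submonoid.powers (X : FrakS p k)) t
  dsimp only at hmk
  obtain ⟨j, hj⟩ := u.2
  have hj' : (X : FrakS p k) ^ j = (u : FrakS p k) := hj
  refine pPow_dvd_of_dvd_mul_X_pow p k n j f ⟨s, algebraMap_SLoc_injective p k ?_⟩
  rw [map_mul, ht, ← hmk, map_mul]
  push_cast
  rw [mul_assoc]
  congr 1
  rw [← map_pow, hj']
  exact IsLocalization.mk'_spec (SLoc p k) s u

lemma pOE_eq : (p : OE p k) = algebraMap (SLoc p k) (OE p k) (p : SLoc p k) := by
  simp [map_natCast]

lemma val_eq_zero_of_mem (m : ℕ) (x : OE p k)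
    (hx : x ∈ Ideal.span {(p : OE p k)} ^ m) : x.val m = 0 := by
  rw [mem_span_pow_iff] at hx
  obtain ⟨z, rfl⟩ := hx
  obtain ⟨w, hw⟩ := Submodule.Quotient.mk_surjective _ (z.val m)
  rw [pOE_eq, ← map_pow, ← Algebra.smul_def, AdicCompletion.val_smul_apply, ← hw,
    ← Submodule.Quotient.mk_smul, Submodule.Quotient.mk_eq_zero, smul_top_eq,
    smul_eq_mul, mem_span_pow_iff]
  exact ⟨w, rfl⟩

lemma exists_of_val_eq_zero (m : ℕ) (x : OE p k) (hx : x.val m = 0) :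
    ∃ z : OE p k, x = (p : OE p k) ^ m * z := by
  obtain ⟨f, rfl⟩ := AdicCompletion.mk_surjective (Ideal.span {(p : SLoc p k)}) (SLoc p k) x
  have hfm : f m ∈ Ideal.span {(p : SLoc p k)} ^ m := by
    rw [← smul_top_eq p k m]
    exact (Submodule.Quotient.mk_eq_zero _).mp hx
  have hmem : ∀ n, f (n + m) ∈ Ideal.span {(p : SLoc p k)} ^ m := by
    intro n
    have h1 := f.property (Nat.le_add_left m n)
    rw [SModEq.sub_mem, smul_top_eq] at h1
    have h2 := Ideal.sub_mem _ hfm h1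
    simpa using h2
  choose g hg using fun n => (mem_span_pow_iff _ m _).mp (hmem n)
  have hgc : ∀ n, g n ≡ g (n + 1)
      [SMOD (Ideal.span {(p : SLoc p k)} ^ n • ⊤ : Submodule (SLoc p k) (SLoc p k))] := by
    intro n
    rw [SModEq.sub_mem, smul_top_eq]
    have h1 := f.property (show n + m ≤ n + 1 + m by omega)
    rw [SModEq.sub_mem, smul_top_eq, mem_span_pow_iff] at h1
    obtain ⟨t, ht⟩ := h1
    have hc : (p : SLoc p k) ^ m * (g n - g (n + 1)) =
        (p : SLoc p k) ^ m * ((p : SLoc p k) ^ n * t) := by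
      rw [mul_sub, ← hg n, ← hg (n + 1), ht, pow_add]
      ring
    rw [mul_left_cancel₀ (pow_ne_zero m (pR_ne_zero p k)) hc, mem_span_pow_iff]
    exact ⟨t, rfl⟩
  refine ⟨AdicCompletion.mk _ _ (AdicCompletion.AdicCauchySequence.mk _ _ g hgc), ?_⟩
  ext n
  rw [pOE_eq, ← map_pow, ← Algebra.smul_def, AdicCompletion.val_smul_apply]
  show Submodule.Quotient.mk (f n) =
    (p : SLoc p k) ^ m • Submodule.Quotient.mk (g n)
  rw [← Submodule.Quotient.mk_smul,
    show (p : SLoc p k) ^ m • g n = (p : SLoc p k) ^ m * g n from rfl, ← hg n]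
  exact SModEq.def.mp (f.property (Nat.le_add_right n m))

lemma exists_limit (y : ℕ → OE p k)
    (hc : ∀ n, 1 ≤ n → y (n + 1) - y n ∈ Ideal.span {(p : OE p k)} ^ n) :
    ∃ Y : OE p k, ∀ n, 1 ≤ n → Y - y n ∈ Ideal.span {(p : OE p k)} ^ n := by
  have htel : ∀ a b, 1 ≤ a → a ≤ b → y b - y a ∈ Ideal.span {(p : OE p k)} ^ a := by
    intro a b ha hab
    induction b, hab using Nat.le_induction with
    | base => simpa using Ideal.zero_mem _
    | succ b hab ih =>
      have h1 := Ideal.pow_le_pow_right hab (hc b (le_trans ha hab))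
      have h2 := Ideal.add_mem _ h1 ih
      simpa using h2
  have hcompat : ∀ {a b : ℕ} (hab : a ≤ b),
      AdicCompletion.transitionMap (Ideal.span {(p : SLoc p k)}) (SLoc p k) hab
        ((y (b + 1)).val b) = (y (a + 1)).val a := by
    intro a b hab
    rw [(y (b + 1)).property hab]
    have hd : (y (b + 1) - y (a + 1)).val a = 0 :=
      val_eq_zero_of_mem p k a _
        (Ideal.pow_le_pow_right (Nat.le_succ a)
          (htel (a + 1) (b + 1) (by omega) (by omega)))
    rw [AdicCompletion.val_sub_apply] at hd
    exact sub_eq_zero.mp hd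
  obtain ⟨Y, hYval⟩ : ∃ Y : OE p k, ∀ n, Y.val n = (y (n + 1)).val n :=
    ⟨⟨fun n => (y (n + 1)).val n, hcompat⟩, fun _ => rfl⟩
  refine ⟨Y, ?_⟩
  intro n hn
  have hval : (Y - y n).val n = 0 := by
    rw [AdicCompletion.val_sub_apply, hYval, ← AdicCompletion.val_sub_apply]
    exact val_eq_zero_of_mem p k n _ (htel n (n + 1) hn (Nat.le_succ n))
  obtain ⟨z, hz⟩ := exists_of_val_eq_zero p k n _ hval
  rw [hz, mem_span_pow_iff]
  exact ⟨z, rfl⟩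

lemma isUnit_of_mul_sub_one_mem (a b : OE p k)
    (h : a * b - 1 ∈ Ideal.span {(p : OE p k)}) : IsUnit a := by
  obtain ⟨c, hcdef⟩ : ∃ c : OE p k, c = 1 - a * b := ⟨_, rfl⟩
  have hcmem : c ∈ Ideal.span {(p : OE p k)} := by
    have hce : c = -(a * b - 1) := by rw [hcdef, neg_sub]
    rw [hce]
    exact neg_mem h
  have hcn : ∀ n, c ^ n ∈ Ideal.span {(p : OE p k)} ^ n := fun n =>
    Ideal.pow_mem_pow hcmem n
  obtain ⟨z, hzdef⟩ : ∃ z : ℕ → OE p k,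
      z = fun n => b * ∑ i ∈ Finset.range n, c ^ i := ⟨_, rfl⟩
  have hzn : ∀ n, z n = b * ∑ i ∈ Finset.range n, c ^ i := fun n => by rw [hzdef]
  have hzc : ∀ n, 1 ≤ n → z (n + 1) - z n ∈ Ideal.span {(p : OE p k)} ^ n := by
    intro n _
    have he : z (n + 1) - z n = b * c ^ n := by
      rw [hzn, hzn, Finset.sum_range_succ, mul_add, add_sub_cancel_left]
    rw [he]
    exact Ideal.mul_mem_left _ _ (hcn n)
  obtain ⟨Z, hZ⟩ := exists_limit p k z hzc
  have hab : a * b = 1 - c := by rw [hcdef, sub_sub_cancel]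
  have haz : ∀ n, a * z n = 1 - c ^ n := by
    intro n
    have hgs := geom_sum_mul c n
    calc a * z n = (a * b) * (∑ i ∈ Finset.range n, c ^ i) := by
          rw [hzn, ← mul_assoc]
      _ = (1 - c) * (∑ i ∈ Finset.range n, c ^ i) := by rw [hab]
      _ = -((∑ i ∈ Finset.range n, c ^ i) * (c - 1)) := by
          rw [← neg_sub c 1, neg_mul, mul_comm]
      _ = -(c ^ n - 1) := by rw [hgs]
      _ = 1 - c ^ n := by rw [neg_sub]
  have hA : ∀ n, 1 ≤ n → a * Z - 1 ∈ Ideal.span {(p : OE p k)} ^ n := by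
    intro n hn
    have he : a * Z - 1 = a * (Z - z n) + (a * z n - 1) := by
      rw [mul_sub, sub_add_sub_cancel]
    rw [he, haz n, sub_sub_cancel_left]
    exact Ideal.add_mem _ (Ideal.mul_mem_left _ _ (hZ n hn)) (neg_mem (hcn n))
  have hzero : a * Z - 1 = 0 := by
    ext n
    rw [AdicCompletion.val_zero_apply]
    rcases Nat.eq_zero_or_pos n with rfl | hn
    · refine val_eq_zero_of_mem p k 0 _ ?_
      rw [pow_zero, Ideal.one_eq_top]
      exact Submodule.mem_top
    · exact val_eq_zero_of_mem p k n _ (hA n hn)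
  exact IsUnit.of_mul_eq_one (a := a) Z (sub_eq_zero.mp hzero)

lemma isUnit_iotaOE (v : FrakS p k) (hv : v ∉ Ideal.span {(p : FrakS p k)}) :
    IsUnit (iotaOE p k v) := by
  classical
  have hex : ∃ m, ¬ (p : WittVector p k) ∣ PowerSeries.coeff m v := by
    by_contra hall
    push_neg at hall
    apply hv
    rw [Ideal.mem_span_singleton]
    have h1 := (pPow_dvd_iff p k 1 v).mpr (fun i => by rw [pow_one]; exact hall i)
    simpa using h1
  obtain ⟨m, hm, hlt⟩ : ∃ m, (¬ (p : WittVector p k) ∣ PowerSeries.coeff m v) ∧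
      ∀ i < m, (p : WittVector p k) ∣ PowerSeries.coeff i v := by
    refine ⟨Nat.find hex, Nat.find_spec hex, fun i hi => ?_⟩
    have h2 := Nat.find_min hex hi
    simpa using h2
  obtain ⟨w, hwdef⟩ : ∃ w : FrakS p k,
      w = PowerSeries.mk fun i => PowerSeries.coeff (m + i) v := ⟨_, rfl⟩
  have hwu : IsUnit w := by
    rw [PowerSeries.isUnit_iff_constantCoeff]
    apply isUnit_witt_of_not_dvd p k
    have hc0 : PowerSeries.constantCoeff w = PowerSeries.coeff m v := by
      rw [hwdef]
      simp
    rw [hc0]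
    exact hm
  have hdvd : (p : FrakS p k) ∣ (v - X ^ m * w) := by
    have h1 : ∀ i, (p : WittVector p k) ∣ PowerSeries.coeff i (v - X ^ m * w) := by
      intro i
      rw [map_sub, PowerSeries.coeff_X_pow_mul']
      split_ifs with h
      · rw [hwdef, PowerSeries.coeff_mk, Nat.add_sub_cancel' h, sub_self]
        exact dvd_zero _
      · rw [sub_zero]
        exact hlt i (by omega)
    have h2 := (pPow_dvd_iff p k 1 _).mpr (fun i => by rw [pow_one]; exact h1 i)
    simpa using h2
  obtain ⟨a, ha⟩ := hdvd
  have hXu : IsUnit (iotaOE p k (X : FrakS p k)) :=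
    (algebraMap (SLoc p k) (OE p k)).isUnit_map
      (IsLocalization.Away.algebraMap_isUnit (S := SLoc p k) (X : FrakS p k))
  have hU : IsUnit (iotaOE p k (X ^ m * w)) := by
    rw [map_mul, map_pow]
    exact (hXu.pow m).mul (hwu.map (iotaOE p k))
  obtain ⟨U, hUeq⟩ := hU
  have hv2 : v = X ^ m * w + (p : FrakS p k) * a := by
    rw [← ha, add_comm, sub_add_cancel]
  have hv' : iotaOE p k v = ↑U + (p : OE p k) * iotaOE p k a := by
    rw [hv2, map_add, ← hUeq, map_mul, map_natCast]
  have key : iotaOE p k v * ↑U⁻¹ - 1 ∈ Ideal.span {(p : OE p k)} := by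
    have he : iotaOE p k v * ↑U⁻¹ - 1 = (p : OE p k) * (iotaOE p k a * ↑U⁻¹) := by
      rw [hv', add_mul, U.mul_inv, mul_assoc, add_sub_cancel_left]
    rw [he]
    exact Ideal.mem_span_singleton.mpr ⟨_, rfl⟩
  exact isUnit_of_mul_sub_one_mem p k _ _ key

end Aux

theorem statement4 (p : ℕ) [Fact p.Prime] (k : Type) [Field k] [CharP k p]
    [PerfectRing k p]
    (v : FrakS p k) (hv : v ∉ Ideal.span {(p : FrakS p k)})
    (x : ℕ → FrakS p k) (y : ℕ → OE p k)
    (hy : ∀ n, 1 ≤ n →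
      y n = iotaOE p k (x n) * (Ring.inverse (iotaOE p k v)) ^ (n - 1))
    (hcauchy : ∀ n, 1 ≤ n →
      y (n + 1) - y n ∈ Ideal.span {(p : OE p k)} ^ n) :
    IsUnit (iotaOE p k v) ∧
    ∃ Y : OE p k,
      (∀ n, 1 ≤ n → Y - y n ∈ Ideal.span {(p : OE p k)} ^ n) ∧
      memSeriesRing p k v Y := by
  classical
  have hvu : IsUnit (iotaOE p k v) := isUnit_iotaOE p k v hv
  refine ⟨hvu, ?_⟩
  obtain ⟨Y, hY⟩ := exists_limit p k y hcauchy
  refine ⟨Y, hY, ?_⟩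
  obtain ⟨V, hVdef⟩ : ∃ V : OE p k, V = Ring.inverse (iotaOE p k v) := ⟨_, rfl⟩
  have hy' : ∀ n, 1 ≤ n → y n = iotaOE p k (x n) * V ^ (n - 1) := by
    intro n hn
    rw [hy n hn, hVdef]
  have hvV : iotaOE p k v * V = 1 := by
    rw [hVdef]
    exact Ring.mul_inverse_cancel _ hvu
  have hVv : V * iotaOE p k v = 1 := by rw [mul_comm]; exact hvV
  have hdiff : ∀ n, 1 ≤ n →
      iotaOE p k (x (n + 1) - x n * v) * V ^ n = y (n + 1) - y n := by
    intro n hn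
    have hn1 : n - 1 + 1 = n := by omega
    have hsplit : V ^ n = V ^ (n - 1) * V := by rw [← pow_succ, hn1]
    calc iotaOE p k (x (n + 1) - x n * v) * V ^ n
        = (iotaOE p k (x (n + 1)) - iotaOE p k (x n) * iotaOE p k v) * V ^ n := by
          rw [map_sub, map_mul]
      _ = iotaOE p k (x (n + 1)) * V ^ n -
            (iotaOE p k (x n) * iotaOE p k v) * (V ^ (n - 1) * V) := by
          rw [sub_mul, hsplit]
      _ = iotaOE p k (x (n + 1)) * V ^ n -
            (iotaOE p k (x n) * V ^ (n - 1)) * (iotaOE p k v * V) := by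
          rw [mul_mul_mul_comm]
      _ = iotaOE p k (x (n + 1)) * V ^ n - iotaOE p k (x n) * V ^ (n - 1) := by
          rw [hvV, mul_one]
      _ = y (n + 1) - y n := by
          rw [hy' (n + 1) (by omega), hy' n hn, Nat.add_sub_cancel]
  have hdvd : ∀ n, 1 ≤ n → ∃ s : FrakS p k,
      x (n + 1) - x n * v = (p : FrakS p k) ^ n * s := by
    intro n hn
    have h1 : iotaOE p k (x (n + 1) - x n * v) * V ^ n ∈
        Ideal.span {(p : OE p k)} ^ n := by
      rw [hdiff n hn]
      exact hcauchy n hn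
    have h2 : iotaOE p k (x (n + 1) - x n * v) ∈ Ideal.span {(p : OE p k)} ^ n := by
      have he : iotaOE p k (x (n + 1) - x n * v) =
          iotaOE p k (x (n + 1) - x n * v) * V ^ n * (iotaOE p k v) ^ n := by
        rw [mul_assoc, ← mul_pow, hVv, one_pow, mul_one]
      rw [he]
      exact Ideal.mul_mem_right _ _ h1
    have h3 := val_eq_zero_of_mem p k n _ h2
    have h4 : Submodule.Quotient.mk (algebraMap (FrakS p k) (SLoc p k)
        (x (n + 1) - x n * v)) = (0 : SLoc p k ⧸ (Ideal.span {(p : SLoc p k)} ^ n • ⊤ :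
          Submodule (SLoc p k) (SLoc p k))) := h3
    have h5 : algebraMap (FrakS p k) (SLoc p k) (x (n + 1) - x n * v) ∈
        Ideal.span {(p : SLoc p k)} ^ n := by
      rw [← smul_top_eq p k n]
      exact (Submodule.Quotient.mk_eq_zero _).mp h4
    exact pPow_dvd_of_algebraMap_mem p k n _ h5
  choose s0 hs0 using hdvd
  obtain ⟨s, hsdef⟩ : ∃ s : ℕ → FrakS p k,
      s = fun n => if h : 1 ≤ n then s0 n h else x 1 := ⟨_, rfl⟩
  have hs_zero : s 0 = x 1 := by rw [hsdef]; exact dif_neg (by omega)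
  have hs_pos : ∀ n (hn : 1 ≤ n), s n = s0 n hn := by
    intro n hn
    rw [hsdef]
    exact dif_pos hn
  have hps : ∀ N, 1 ≤ N → partialSum p k v s N = y N := by
    intro N hN
    induction N, hN using Nat.le_induction with
    | base =>
      rw [partialSum, Finset.sum_range_one, pow_zero, pow_zero, mul_one, mul_one,
        hs_zero, hy' 1 le_rfl]
      simp only [Nat.sub_self, pow_zero, mul_one]
    | succ N hN ih =>
      have hterm : iotaOE p k (s N) * (p : OE p k) ^ N *
          (Ring.inverse (iotaOE p k v)) ^ N = y (N + 1) - y N := by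
        have he1 : iotaOE p k (x (N + 1) - x N * v) =
            (p : OE p k) ^ N * iotaOE p k (s0 N hN) := by
          rw [hs0 N hN, map_mul, map_pow, map_natCast]
        rw [hs_pos N hN, ← hVdef, mul_comm (iotaOE p k (s0 N hN)), ← he1]
        exact hdiff N hN
      rw [partialSum, Finset.sum_range_succ, ← partialSum, ih, hterm, add_comm,
        sub_add_cancel]
  refine ⟨s, fun N => ?_⟩
  rcases Nat.eq_zero_or_pos N with rfl | hN
  · rw [pow_zero, Ideal.one_eq_top]
    exact Submodule.mem_top
  · rw [hps N hN]
    exact hY N hN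
end
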